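/- Let I ⊆ R = ℚ[x_1,...,x_r] be a monomial ideal with R/I artinian. If R/I has the Weak Lefschetz Property over ℚ (equivalently, over any field of characteristic 0), then R/I (i.e., the algebra defined by the same monomial generators) has the WLP over any field whose characteristic is sufficiently large. -/

import Mathlib

open MvPolynomial

/-- The dimension of the degree-`i` component of the graded algebra `R/I`, where
`R = k[x_1,...,x_r]` is standard graded: it is the image of the space of homogeneous
polynomials of degree `i` in the quotient. -/
noncomputable def hilb {k : Type*} [Field k] {σ : Type*} (I : Ideal (MvPolynomial σ k))
    (i : ℕ) : ℕ :=
  Module.finrank k ((homogeneousSubmodule σ k i).map (Ideal.Quotient.mkₐ k I).toLinearMap)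

/-- Injectivity of the multiplication map `×f : [R/I]_i → [R/I]_{i + deg f}`. -/
def mulInj {k : Type*} [Field k] {σ : Type*} (I : Ideal (MvPolynomial σ k))
    (f : MvPolynomial σ k) (i : ℕ) : Prop :=
  ∀ g ∈ homogeneousSubmodule σ k i, f * g ∈ I → g ∈ I

/-- Surjectivity of the multiplication map `×f : [R/I]_i → [R/I]_j` (with `j = i + deg f`). -/
def mulSurj {k : Type*} [Field k] {σ : Type*} (I : Ideal (MvPolynomial σ k))
    (f : MvPolynomial σ k) (i j : ℕ) : Prop :=
  ∀ g ∈ homogeneousSubmodule σ k j, ∃ h ∈ homogeneousSubmodule σ k i, g - f * h ∈ I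

universe u

open Matrix

/-! ### Auxiliary matrix lemmas -/

section MatrixLemmas

set_option linter.unusedSectionVars false

variable {m n : Type} [Fintype m] [Fintype n] [DecidableEq m] [DecidableEq n]

lemma matInj_of_det_ne {K : Type*} [Field K] {M : Matrix m n K}
    (h : (Mᵀ * M).det ≠ 0) : ∀ v : n → K, M.mulVec v = 0 → v = 0 := by
  intro v hv
  by_contra hne
  exact h (Matrix.exists_mulVec_eq_zero_iff.mp ⟨v, hne, by
    rw [← Matrix.mulVec_mulVec, hv, Matrix.mulVec_zero]⟩)

lemma det_ne_of_matInj {M : Matrix m n ℚ}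
    (h : ∀ v : n → ℚ, M.mulVec v = 0 → v = 0) : (Mᵀ * M).det ≠ 0 := by
  rw [Ne, ← Matrix.exists_mulVec_eq_zero_iff]
  rintro ⟨v, hv0, hv⟩
  apply hv0
  apply h
  rw [← dotProduct_self_eq_zero]
  calc M.mulVec v ⬝ᵥ M.mulVec v = (v ᵥ* Mᵀ) ⬝ᵥ (M.mulVec v) := by
        rw [Matrix.vecMul_transpose]
    _ = v ⬝ᵥ (Mᵀ.mulVec (M.mulVec v)) := (Matrix.dotProduct_mulVec _ _ _).symm
    _ = 0 := by rw [Matrix.mulVec_mulVec, hv, dotProduct_zero]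

lemma matSurj_of_det_ne {K : Type*} [Field K] {M : Matrix m n K}
    (h : (M * Mᵀ).det ≠ 0) : ∀ u : m → K, ∃ v, M.mulVec v = u := by
  intro u
  refine ⟨Mᵀ.mulVec ((M * Mᵀ)⁻¹.mulVec u), ?_⟩
  rw [Matrix.mulVec_mulVec, Matrix.mulVec_mulVec,
    Matrix.mul_nonsing_inv _ (isUnit_iff_ne_zero.mpr h), Matrix.one_mulVec]

lemma det_ne_of_matSurj {M : Matrix m n ℚ}
    (h : ∀ u : m → ℚ, ∃ v, M.mulVec v = u) : (M * Mᵀ).det ≠ 0 := by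
  rw [Ne, ← Matrix.exists_mulVec_eq_zero_iff]
  rintro ⟨u, hu0, hu⟩
  apply hu0
  have h1 : Mᵀ.mulVec u = 0 := by
    rw [← dotProduct_self_eq_zero]
    calc Mᵀ.mulVec u ⬝ᵥ Mᵀ.mulVec u = (u ᵥ* M) ⬝ᵥ (Mᵀ.mulVec u) := by
          rw [← Matrix.mulVec_transpose]
      _ = u ⬝ᵥ (M.mulVec (Mᵀ.mulVec u)) := (Matrix.dotProduct_mulVec _ _ _).symm
      _ = 0 := by rw [Matrix.mulVec_mulVec, hu, dotProduct_zero]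
  obtain ⟨w, hw⟩ := h u
  rw [← dotProduct_self_eq_zero]
  calc u ⬝ᵥ u = u ⬝ᵥ (M.mulVec w) := by rw [hw]
    _ = (u ᵥ* M) ⬝ᵥ w := Matrix.dotProduct_mulVec _ _ _
    _ = (Mᵀ.mulVec u) ⬝ᵥ w := by rw [Matrix.mulVec_transpose]
    _ = 0 := by rw [h1, zero_dotProduct]

lemma intCast_ne_zero_of_lt {K : Type*} [Field K] {p : ℕ} (hp : p.Prime) [CharP K p]
    {d : ℤ} (hd : d ≠ 0) (hlt : d.natAbs < p) : (d : K) ≠ 0 := by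
  rw [Ne, CharP.intCast_eq_zero_iff K p]
  intro hdvd
  have hdvd' : p ∣ d.natAbs := by
    rwa [← Int.natAbs_natCast p, Int.natAbs_dvd_natAbs]
  exact absurd (Nat.le_of_dvd (Int.natAbs_pos.mpr hd) hdvd') (not_le.mpr hlt)

lemma det_map_transpose_mul {K : Type*} [Field K] (M : Matrix m n ℤ) :
    ((M.map (Int.cast : ℤ → K))ᵀ * (M.map (Int.cast : ℤ → K))).det
      = (((Mᵀ * M).det : ℤ) : K) := by
  have h := RingHom.map_det (Int.castRingHom K) (Mᵀ * M)
  simp only [RingHom.mapMatrix_apply] at h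
  rw [Matrix.map_mul (f := Int.castRingHom K), Matrix.transpose_map] at h
  simp only [Int.coe_castRingHom] at h
  exact h.symm

lemma det_map_mul_transpose {K : Type*} [Field K] (M : Matrix m n ℤ) :
    ((M.map (Int.cast : ℤ → K)) * (M.map (Int.cast : ℤ → K))ᵀ).det
      = (((M * Mᵀ).det : ℤ) : K) := by
  have h := RingHom.map_det (Int.castRingHom K) (M * Mᵀ)
  simp only [RingHom.mapMatrix_apply] at h
  rw [Matrix.map_mul (f := Int.castRingHom K), Matrix.transpose_map] at h
  simp only [Int.coe_castRingHom] at h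
  exact h.symm

end MatrixLemmas

/-! ### The combinatorial bridge -/

section PolyBridge

variable {r : ℕ} (S : Set (Fin r →₀ ℕ)) (T : Finset (Fin r →₀ ℕ))
variable (K : Type*) [Field K]

/-- The monomial ideal generated by the monomials with exponents in `S`. -/
noncomputable abbrev Ik : Ideal (MvPolynomial (Fin r) K) :=
  Ideal.span ((fun s => (monomial s (1 : K))) '' S)

/-- Exponents dominated by a generator. -/
def Dse : Set (Fin r →₀ ℕ) := {a | ∃ s ∈ S, s ≤ a}

lemma mem_Ik_iff {g : MvPolynomial (Fin r) K} :
    g ∈ Ik S K ↔ ∀ a ∈ g.support, a ∈ Dse S :=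
  MvPolynomial.mem_ideal_span_monomial_image

/-- The standard monomials of degree `i` (with respect to the finite set `T` of
all standard monomials). -/
noncomputable def Bse (i : ℕ) : Finset (Fin r →₀ ℕ) := T.filter (fun a => a.degree = i)

/-- The linear form with integer coefficients `c`. -/
noncomputable def ell (c : Fin r → ℤ) : MvPolynomial (Fin r) K :=
  ∑ j : Fin r, monomial (Finsupp.single j 1) ((c j : K))

lemma ell_isHom (c : Fin r → ℤ) : (ell K c).IsHomogeneous 1 := by
  rw [← mem_homogeneousSubmodule]
  refine Submodule.sum_mem _ fun j _ => ?_
  rw [mem_homogeneousSubmodule]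
  exact isHomogeneous_monomial _ (Finsupp.degree_single _ _)

/-- The polynomial with coefficients `v` on the standard monomials of degree `i`. -/
noncomputable def Pv (i : ℕ) (v : (Bse T i) → K) : MvPolynomial (Fin r) K :=
  ∑ a : (Bse T i), monomial (a : Fin r →₀ ℕ) (v a)

lemma coeff_Pv_mem {i : ℕ} (v : (Bse T i) → K) {b : Fin r →₀ ℕ} (h : b ∈ Bse T i) :
    coeff b (Pv T K i v) = v ⟨b, h⟩ := by
  rw [Pv, MvPolynomial.coeff_sum]
  simp_rw [MvPolynomial.coeff_monomial]
  rw [Finset.sum_eq_single (⟨b, h⟩ : (Bse T i))]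
  · rw [if_pos rfl]
  · intro a _ hne
    exact if_neg fun heq => hne (Subtype.ext heq)
  · exact fun hx => absurd (Finset.mem_univ _) hx

lemma coeff_Pv_not {i : ℕ} (v : (Bse T i) → K) {b : Fin r →₀ ℕ} (h : b ∉ Bse T i) :
    coeff b (Pv T K i v) = 0 := by
  rw [Pv, MvPolynomial.coeff_sum]
  refine Finset.sum_eq_zero fun a _ => ?_
  rw [MvPolynomial.coeff_monomial]
  exact if_neg (fun heq : (a : Fin r →₀ ℕ) = b => h (heq ▸ a.2))

lemma Pv_isHom {i : ℕ} (v : (Bse T i) → K) : (Pv T K i v).IsHomogeneous i := by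
  rw [← mem_homogeneousSubmodule]
  refine Submodule.sum_mem _ fun a _ => ?_
  rw [mem_homogeneousSubmodule]
  exact isHomogeneous_monomial _ ((Finset.mem_filter.mp a.2).2)

/-- The integer matrix of the multiplication map `× ell c` from degree `i`
standard monomials to degree `i+1` standard monomials. -/
noncomputable def Wmat (c : Fin r → ℤ) (i : ℕ) : Matrix (Bse T (i+1)) (Bse T i) ℤ :=
  Matrix.of fun b a => ∑ j : Fin r,
    if (a : Fin r →₀ ℕ) + Finsupp.single j 1 = (b : Fin r →₀ ℕ) then c j else 0

lemma coeff_ell_mul (c : Fin r → ℤ) (i : ℕ) (v : (Bse T i) → K) (b : Fin r →₀ ℕ) :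
    coeff b (ell K c * Pv T K i v)
      = ∑ a : (Bse T i),
          (∑ j : Fin r, if (a : Fin r →₀ ℕ) + Finsupp.single j 1 = b then (c j : K) else 0)
            * v a := by
  rw [ell, Pv, Finset.sum_mul_sum]
  simp_rw [MvPolynomial.monomial_mul]
  rw [MvPolynomial.coeff_sum]
  simp_rw [MvPolynomial.coeff_sum, MvPolynomial.coeff_monomial]
  rw [Finset.sum_comm]
  refine Finset.sum_congr rfl fun a _ => ?_
  rw [Finset.sum_mul]
  refine Finset.sum_congr rfl fun j _ => ?_
  rw [ite_mul, zero_mul, add_comm (Finsupp.single j 1) (a : Fin r →₀ ℕ)]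

lemma mulVec_eq_coeff (c : Fin r → ℤ) (i : ℕ) (v : (Bse T i) → K) (b : (Bse T (i+1))) :
    ((Wmat T c i).map (Int.cast : ℤ → K)).mulVec v b
      = coeff (↑b) (ell K c * Pv T K i v) := by
  rw [coeff_ell_mul]
  simp only [Matrix.mulVec, dotProduct, Matrix.map_apply, Wmat, Matrix.of_apply]
  refine Finset.sum_congr rfl fun a _ => ?_
  congr 1
  rw [Int.cast_sum]
  refine Finset.sum_congr rfl fun j _ => ?_
  rw [apply_ite (Int.cast : ℤ → K), Int.cast_zero]

variable {S T}

lemma sub_Pv_mem (hT : ∀ a, a ∈ T ↔ a ∉ Dse S) {i : ℕ} {g : MvPolynomial (Fin r) K}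
    (hg : g.IsHomogeneous i) :
    g - Pv T K i (fun a => coeff (↑a) g) ∈ Ik S K := by
  rw [mem_Ik_iff]
  intro b hb
  by_contra hbD
  have hbT : b ∈ T := (hT b).mpr hbD
  rw [MvPolynomial.mem_support_iff] at hb
  apply hb
  rw [MvPolynomial.coeff_sub]
  by_cases hd : b.degree = i
  · rw [coeff_Pv_mem T K _ (Finset.mem_filter.mpr ⟨hbT, hd⟩), sub_self]
  · rw [hg.coeff_eq_zero hd,
      coeff_Pv_not T K _ (fun hmem => hd (Finset.mem_filter.mp hmem).2), sub_zero]

lemma bridge_inj (hT : ∀ a, a ∈ T ↔ a ∉ Dse S) (c : Fin r → ℤ) (i : ℕ) :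
    mulInj (Ik S K) (ell K c) i ↔
      (∀ v : (Bse T i) → K,
        ((Wmat T c i).map (Int.cast : ℤ → K)).mulVec v = 0 → v = 0) := by
  constructor
  · intro h v hv
    have hgh : (Pv T K i v).IsHomogeneous i := Pv_isHom T K v
    have hmul : ell K c * Pv T K i v ∈ Ik S K := by
      rw [mem_Ik_iff]
      intro b hb
      by_contra hbD
      have hbT : b ∈ T := (hT b).mpr hbD
      rw [MvPolynomial.mem_support_iff] at hb
      apply hb
      by_cases hd : b.degree = i + 1
      · have hmem : b ∈ Bse T (i+1) := Finset.mem_filter.mpr ⟨hbT, hd⟩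
        have heq := congrFun hv (⟨b, hmem⟩ : (Bse T (i+1)))
        rw [mulVec_eq_coeff] at heq
        exact heq
      · exact ((ell_isHom K c).mul hgh).coeff_eq_zero (by omega)
    have hginI : Pv T K i v ∈ Ik S K :=
      h _ ((mem_homogeneousSubmodule _ _).mpr hgh) hmul
    funext a
    have haD : (↑a : Fin r →₀ ℕ) ∉ Dse S := (hT ↑a).mp (Finset.mem_filter.mp a.2).1
    have hz : coeff (↑a) (Pv T K i v) = 0 := by
      by_contra hc
      exact haD ((mem_Ik_iff S K).mp hginI _ (MvPolynomial.mem_support_iff.mpr hc))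
    rw [coeff_Pv_mem T K v a.2] at hz
    simpa using hz
  · intro h g hgmem hmul
    have hg : g.IsHomogeneous i := (mem_homogeneousSubmodule _ _).mp hgmem
    set v : (Bse T i) → K := fun a => coeff (↑a) g with hvdef
    have hdec : g - Pv T K i v ∈ Ik S K := sub_Pv_mem K hT hg
    have hPmem : ell K c * Pv T K i v ∈ Ik S K := by
      have hrw : ell K c * Pv T K i v
          = ell K c * g - ell K c * (g - Pv T K i v) := by ring
      rw [hrw]
      exact Ideal.sub_mem _ hmul (Ideal.mul_mem_left _ _ hdec)
    have hv0 : ((Wmat T c i).map (Int.cast : ℤ → K)).mulVec v = 0 := by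
      funext b
      rw [mulVec_eq_coeff]
      have hbD : (↑b : Fin r →₀ ℕ) ∉ Dse S := (hT ↑b).mp (Finset.mem_filter.mp b.2).1
      have hz : coeff (↑b) (ell K c * Pv T K i v) = 0 := by
        by_contra hc
        exact hbD ((mem_Ik_iff S K).mp hPmem _ (MvPolynomial.mem_support_iff.mpr hc))
      simpa using hz
    have hv := h v hv0
    have hPv0 : Pv T K i v = 0 := by
      rw [Pv, hv]
      simp
    rw [hPv0, sub_zero] at hdec
    exact hdec

lemma bridge_surj (hT : ∀ a, a ∈ T ↔ a ∉ Dse S) (c : Fin r → ℤ) (i : ℕ) :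
    mulSurj (Ik S K) (ell K c) i (i + 1) ↔
      (∀ u : (Bse T (i+1)) → K, ∃ v : (Bse T i) → K,
        ((Wmat T c i).map (Int.cast : ℤ → K)).mulVec v = u) := by
  constructor
  · intro h u
    have hgh : (Pv T K (i+1) u).IsHomogeneous (i+1) := Pv_isHom T K u
    obtain ⟨h0, h0mem, hsub⟩ := h _ ((mem_homogeneousSubmodule _ _).mpr hgh)
    have hh0 : h0.IsHomogeneous i := (mem_homogeneousSubmodule _ _).mp h0mem
    set v : (Bse T i) → K := fun a => coeff (↑a) h0 with hvdef
    have hdec : h0 - Pv T K i v ∈ Ik S K := sub_Pv_mem K hT hh0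
    have hmem : Pv T K (i+1) u - ell K c * Pv T K i v ∈ Ik S K := by
      have hrw : Pv T K (i+1) u - ell K c * Pv T K i v
          = (Pv T K (i+1) u - ell K c * h0) + ell K c * (h0 - Pv T K i v) := by ring
      rw [hrw]
      exact Ideal.add_mem _ hsub (Ideal.mul_mem_left _ _ hdec)
    refine ⟨v, funext fun b => ?_⟩
    rw [mulVec_eq_coeff]
    have hbD : (↑b : Fin r →₀ ℕ) ∉ Dse S := (hT ↑b).mp (Finset.mem_filter.mp b.2).1
    have hz : coeff (↑b) (Pv T K (i+1) u - ell K c * Pv T K i v) = 0 := by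
      by_contra hc
      exact hbD ((mem_Ik_iff S K).mp hmem _ (MvPolynomial.mem_support_iff.mpr hc))
    rw [MvPolynomial.coeff_sub, sub_eq_zero] at hz
    rw [← hz, coeff_Pv_mem T K u b.2]
  · intro h g hgmem
    have hg : g.IsHomogeneous (i+1) := (mem_homogeneousSubmodule _ _).mp hgmem
    obtain ⟨v, hv⟩ := h (fun b => coeff (↑b) g)
    refine ⟨Pv T K i v, (mem_homogeneousSubmodule _ _).mpr (Pv_isHom T K v), ?_⟩
    rw [mem_Ik_iff]
    intro b hb
    by_contra hbD
    have hbT : b ∈ T := (hT b).mpr hbD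
    rw [MvPolynomial.mem_support_iff] at hb
    apply hb
    rw [MvPolynomial.coeff_sub]
    by_cases hd : b.degree = i + 1
    · have hmem : b ∈ Bse T (i+1) := Finset.mem_filter.mpr ⟨hbT, hd⟩
      have heq := congrFun hv (⟨b, hmem⟩ : (Bse T (i+1)))
      rw [mulVec_eq_coeff] at heq
      rw [← heq, sub_self]
    · rw [hg.coeff_eq_zero hd,
        ((ell_isHom K c).mul (Pv_isHom T K v)).coeff_eq_zero (by omega), sub_zero]

end PolyBridge

/-! ### Degree-one polynomials over ℚ -/

section DegOne

variable {r : ℕ}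

lemma exists_single_of_degree_one {b : Fin r →₀ ℕ} (hb : b.degree = 1) :
    ∃ j, b = Finsupp.single j 1 := by
  have hne : b.support.Nonempty := by
    rw [Finsupp.support_nonempty_iff]
    intro h0
    rw [h0] at hb
    simp at hb
  obtain ⟨j, hj⟩ := hne
  have hji : 1 ≤ b j := Nat.one_le_iff_ne_zero.mpr (Finsupp.mem_support_iff.mp hj)
  have hle : b j ≤ b.degree := Finsupp.le_degree j b
  have hbj : b j = 1 := le_antisymm (hb ▸ hle) hji
  refine ⟨j, ?_⟩
  ext x
  by_cases hx : x = j
  · subst hx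
    rw [hbj, Finsupp.single_eq_same]
  · rw [Finsupp.single_eq_of_ne' fun hh => hx hh.symm]
    by_contra hbx
    have hxs : x ∈ b.support := Finsupp.mem_support_iff.mpr hbx
    have hsub : ({j, x} : Finset (Fin r)) ⊆ b.support := by
      intro y hy
      rcases Finset.mem_insert.mp hy with rfl | hy
      · exact hj
      · rw [Finset.mem_singleton] at hy
        subst hy
        exact hxs
    have hsum : b j + b x ≤ b.degree := by
      rw [Finsupp.degree]
      calc b j + b x = ∑ y ∈ ({j, x} : Finset (Fin r)), b y := by
            rw [Finset.sum_insert (by simpa using fun hh => hx hh.symm),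
              Finset.sum_singleton]
        _ ≤ ∑ y ∈ b.support, b y := Finset.sum_le_sum_of_subset hsub
    omega

lemma hom1_eq_sum {f : MvPolynomial (Fin r) ℚ} (hf : f.IsHomogeneous 1) :
    f = ∑ j : Fin r, monomial (Finsupp.single j 1) (coeff (Finsupp.single j 1) f) := by
  ext b
  rw [MvPolynomial.coeff_sum]
  simp_rw [MvPolynomial.coeff_monomial]
  by_cases hb : ∃ j, b = Finsupp.single j 1
  · obtain ⟨j0, rfl⟩ := hb
    rw [Finset.sum_eq_single j0]
    · rw [if_pos rfl]
    · intro j _ hjne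
      refine if_neg fun heq => hjne ?_
      exact (Finsupp.single_left_inj one_ne_zero).mp heq
    · exact fun hx => absurd (Finset.mem_univ _) hx
  · rw [hf.coeff_eq_zero fun hdeg => hb (exists_single_of_degree_one hdeg),
      Finset.sum_eq_zero]
    intro j _
    exact if_neg fun heq => hb ⟨j, heq.symm⟩

end DegOne

/-! ### Rescaling the linear form -/

section Rescale

variable {r : ℕ} {K : Type*} [Field K]

lemma mulInj_Cmul {I : Ideal (MvPolynomial (Fin r) K)} {ℓ : MvPolynomial (Fin r) K}
    {d : K} (hd : d ≠ 0) {i : ℕ} (h : mulInj I ℓ i) : mulInj I (C d * ℓ) i := by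
  intro g hg hmul
  apply h g hg
  have hCC : C (d⁻¹ : K) * C d = (1 : MvPolynomial (Fin r) K) := by
    rw [← MvPolynomial.C_mul, inv_mul_cancel₀ hd, MvPolynomial.C_1]
  have hrw : ℓ * g = C d⁻¹ * (C d * ℓ * g) := by
    calc ℓ * g = (C d⁻¹ * C d) * (ℓ * g) := by rw [hCC, one_mul]
      _ = C d⁻¹ * (C d * ℓ * g) := by ring
  rw [hrw]
  exact Ideal.mul_mem_left _ _ hmul

lemma mulSurj_Cmul {I : Ideal (MvPolynomial (Fin r) K)} {ℓ : MvPolynomial (Fin r) K}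
    {d : K} (hd : d ≠ 0) {i j : ℕ} (h : mulSurj I ℓ i j) : mulSurj I (C d * ℓ) i j := by
  intro g hg
  obtain ⟨h0, hmem, hsub⟩ := h g hg
  refine ⟨C d⁻¹ * h0, ?_, ?_⟩
  · rw [← MvPolynomial.smul_eq_C_mul]
    exact Submodule.smul_mem _ _ hmem
  · have hCC : C (d : K) * C (d⁻¹ : K) = (1 : MvPolynomial (Fin r) K) := by
      rw [← MvPolynomial.C_mul, mul_inv_cancel₀ hd, MvPolynomial.C_1]
    have hrw : C d * ℓ * (C d⁻¹ * h0) = ℓ * h0 := by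
      calc C d * ℓ * (C d⁻¹ * h0) = (C d * C d⁻¹) * (ℓ * h0) := by ring
        _ = ℓ * h0 := by rw [hCC, one_mul]
    rw [hrw]
    exact hsub

end Rescale

/-- Cook–Nagel: if an artinian monomial algebra has the WLP in characteristic
zero, then it has the WLP over every field of sufficiently large characteristic. -/
theorem stmt9 (r : ℕ) (S : Set (Fin r →₀ ℕ))
    (hart : Module.Finite ℚ
      (MvPolynomial (Fin r) ℚ ⧸ Ideal.span ((fun s => (monomial s (1 : ℚ))) '' S)))
    (hwlp : ∃ ℓ ∈ homogeneousSubmodule (Fin r) ℚ 1, ∀ i : ℕ,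
      mulInj (Ideal.span ((fun s => (monomial s (1 : ℚ))) '' S)) ℓ i ∨
      mulSurj (Ideal.span ((fun s => (monomial s (1 : ℚ))) '' S)) ℓ i (i + 1)) :
    ∃ N : ℕ, ∀ (k : Type u) [Field k], ∀ p : ℕ, p.Prime → CharP k p → N ≤ p →
      ∃ ℓ ∈ homogeneousSubmodule (Fin r) k 1, ∀ i : ℕ,
        mulInj (Ideal.span ((fun s => (monomial s (1 : k))) '' S)) ℓ i ∨
        mulSurj (Ideal.span ((fun s => (monomial s (1 : k))) '' S)) ℓ i (i + 1) := by
  classical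
  -- Step 1: the set of standard monomials is finite.
  have hDfin : {a : Fin r →₀ ℕ | a ∉ Dse S}.Finite := by
    have hli : LinearIndependent ℚ (fun a : {a : Fin r →₀ ℕ | a ∉ Dse S} =>
        (Ideal.Quotient.mkₐ ℚ (Ik S ℚ)) (monomial (↑a : Fin r →₀ ℕ) (1 : ℚ))) := by
      rw [linearIndependent_iff']
      intro s g hsum a0 ha0
      by_contra hg0
      have hq : (∑ a ∈ s, monomial (↑a : Fin r →₀ ℕ) (g a)) ∈ Ik S ℚ := by
        have hmk : (Ideal.Quotient.mkₐ ℚ (Ik S ℚ))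
            (∑ a ∈ s, monomial (↑a : Fin r →₀ ℕ) (g a)) = 0 := by
          rw [map_sum]
          calc ∑ a ∈ s, (Ideal.Quotient.mkₐ ℚ (Ik S ℚ)) (monomial (↑a : Fin r →₀ ℕ) (g a))
              = ∑ a ∈ s, g a • (Ideal.Quotient.mkₐ ℚ (Ik S ℚ))
                  (monomial (↑a : Fin r →₀ ℕ) (1 : ℚ)) := by
                refine Finset.sum_congr rfl fun a _ => ?_
                rw [← _root_.map_smul, MvPolynomial.smul_monomial, smul_eq_mul, mul_one]
            _ = 0 := hsum
        rwa [Ideal.Quotient.mkₐ_eq_mk, Ideal.Quotient.eq_zero_iff_mem] at hmk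
      refine a0.2 ((mem_Ik_iff S ℚ).mp hq (↑a0) ?_)
      rw [MvPolynomial.mem_support_iff, MvPolynomial.coeff_sum]
      simp_rw [MvPolynomial.coeff_monomial]
      rw [Finset.sum_eq_single a0]
      · rwa [if_pos rfl]
      · intro a _ hne
        exact if_neg fun heq => hne (Subtype.ext heq)
      · exact fun hx => absurd ha0 hx
    have : Finite {a : Fin r →₀ ℕ | a ∉ Dse S} := hli.finite
    exact Set.toFinite _
  set T : Finset (Fin r →₀ ℕ) := hDfin.toFinset with hTdef
  have hT : ∀ a, a ∈ T ↔ a ∉ Dse S := fun a => hDfin.mem_toFinset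
  set m : ℕ := T.sup Finsupp.degree + 1 with hmdef
  have hBempty : ∀ i, m ≤ i → Bse T i = ∅ := by
    intro i hi
    rw [Finset.eq_empty_iff_forall_notMem]
    intro a ha
    obtain ⟨haT, had⟩ := Finset.mem_filter.mp ha
    have := Finset.le_sup (f := Finsupp.degree) haT
    omega
  -- Step 2: clear denominators of the characteristic-zero Lefschetz element.
  obtain ⟨ℓ₀, hℓ₀mem, hℓ₀⟩ := hwlp
  have hl0hom : ℓ₀.IsHomogeneous 1 := (mem_homogeneousSubmodule _ _).mp hℓ₀mem
  obtain ⟨c, dd, hdd0, hc⟩ : ∃ (c : Fin r → ℤ) (dd : ℤ), dd ≠ 0 ∧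
      ∀ j, ((c j : ℤ) : ℚ) = (dd : ℚ) * coeff (Finsupp.single j 1) ℓ₀ := by
    set q : Fin r → ℚ := fun j => coeff (Finsupp.single j 1) ℓ₀ with hqdef
    have hden : ∀ j : Fin r, (((q j).den : ℤ)) ∣ ∏ j : Fin r, ((q j).den : ℤ) := fun j =>
      Finset.dvd_prod_of_mem _ (Finset.mem_univ j)
    choose e he using hden
    refine ⟨fun j => (q j).num * e j, ∏ j : Fin r, ((q j).den : ℤ),
      Finset.prod_ne_zero_iff.mpr fun j _ => Int.natCast_ne_zero.mpr (q j).den_nz, ?_⟩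
    intro j
    have hden' : (((q j).den : ℚ)) ≠ 0 := Nat.cast_ne_zero.mpr (q j).den_nz
    have hnum : ((q j).num : ℚ) = q j * ((q j).den : ℚ) := by
      rw [eq_comm]
      exact (eq_div_iff hden').mp ((q j).num_div_den).symm
    have hddq : ((∏ j : Fin r, ((q j).den : ℤ) : ℤ) : ℚ) = ((q j).den : ℚ) * (e j : ℚ) := by
      rw [he j]
      push_cast
      ring
    push_cast
    push_cast at hddq
    rw [hnum, hddq]
    ring
  have hddQ : ((dd : ℤ) : ℚ) ≠ 0 := Int.cast_ne_zero.mpr hdd0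
  have hellQ : ell ℚ c = C ((dd : ℤ) : ℚ) * ℓ₀ := by
    conv_rhs => rw [hom1_eq_sum hl0hom]
    rw [Finset.mul_sum, ell]
    refine Finset.sum_congr rfl fun j _ => ?_
    rw [MvPolynomial.C_mul_monomial, hc j]
  -- Step 3: over ℚ, the matrices have maximal rank.
  have hQmat : ∀ i,
      (∀ v : (Bse T i) → ℚ, ((Wmat T c i).map (Int.cast : ℤ → ℚ)).mulVec v = 0 → v = 0) ∨
      (∀ u : (Bse T (i+1)) → ℚ, ∃ v : (Bse T i) → ℚ,
        ((Wmat T c i).map (Int.cast : ℤ → ℚ)).mulVec v = u) := by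
    intro i
    rcases hℓ₀ i with h | h
    · left
      exact (bridge_inj ℚ hT c i).mp (hellQ ▸ mulInj_Cmul hddQ h)
    · right
      exact (bridge_surj ℚ hT c i).mp (hellQ ▸ mulSurj_Cmul hddQ h)
  -- Step 4: extract nonzero integer determinants.
  have key : ∀ i, ∃ ei : ℤ, ei ≠ 0 ∧ ∀ (k : Type u) [Field k], ∀ p : ℕ,
      p.Prime → CharP k p → ei.natAbs < p →
      ((∀ v : (Bse T i) → k,
          ((Wmat T c i).map (Int.cast : ℤ → k)).mulVec v = 0 → v = 0) ∨
       (∀ u : (Bse T (i+1)) → k, ∃ v : (Bse T i) → k,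
          ((Wmat T c i).map (Int.cast : ℤ → k)).mulVec v = u)) := by
    intro i
    rcases hQmat i with h | h
    · have hne : ((((Wmat T c i)ᵀ * Wmat T c i).det : ℤ) : ℚ) ≠ 0 := by
        rw [← det_map_transpose_mul]
        exact det_ne_of_matInj h
      have hne' : ((Wmat T c i)ᵀ * Wmat T c i).det ≠ 0 := fun h0 => hne (by rw [h0]; simp)
      refine ⟨((Wmat T c i)ᵀ * Wmat T c i).det, hne', ?_⟩
      intro k _ p hp hcp hlt
      left
      apply matInj_of_det_ne
      rw [det_map_transpose_mul]
      exact intCast_ne_zero_of_lt hp hne' hlt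
    · have hne : ((((Wmat T c i) * (Wmat T c i)ᵀ).det : ℤ) : ℚ) ≠ 0 := by
        rw [← det_map_mul_transpose]
        exact det_ne_of_matSurj h
      have hne' : ((Wmat T c i) * (Wmat T c i)ᵀ).det ≠ 0 := fun h0 => hne (by rw [h0]; simp)
      refine ⟨((Wmat T c i) * (Wmat T c i)ᵀ).det, hne', ?_⟩
      intro k _ p hp hcp hlt
      right
      apply matSurj_of_det_ne
      rw [det_map_mul_transpose]
      exact intCast_ne_zero_of_lt hp hne' hlt
  choose ei hei0 hei using key
  -- Step 5: conclusion.
  refine ⟨((Finset.range m).sup fun i => (ei i).natAbs) + 1, ?_⟩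
  intro k _ p hp hcp hNp
  refine ⟨ell k c, (mem_homogeneousSubmodule _ _).mpr (ell_isHom k c), ?_⟩
  intro i
  by_cases him : i < m
  · have hlt : (ei i).natAbs < p := by
      have hle : (ei i).natAbs ≤ (Finset.range m).sup fun i => (ei i).natAbs :=
        Finset.le_sup (f := fun i => (ei i).natAbs) (Finset.mem_range.mpr him)
      omega
    rcases hei i k p hp hcp hlt with h | h
    · left
      exact (bridge_inj k hT c i).mpr h
    · right
      exact (bridge_surj k hT c i).mpr h
  · right
    apply (bridge_surj k hT c i).mpr
    intro u
    refine ⟨0, funext fun b => ?_⟩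
    exact absurd b.2
      (Finset.eq_empty_iff_forall_notMem.mp (hBempty (i+1) (by omega)) _)
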